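/- For every positive integer n and real q with 0 < q < 1, ∑_{k=1}^n (-1)^{k+1} q^{k(k+1)/2} / (1-q^k) · C_q(n,k) = ∑_{k=1}^n q^k/(1-q^k), where C_q(n,k) denotes the Gaussian binomial coefficient. -/

import Mathlib

open Finset

/-- Gaussian binomial coefficient, vanishing unless `k ≤ n`. -/
noncomputable def qbinom (q : ℝ) (n k : ℕ) : ℝ :=
  if k ≤ n then ∏ j ∈ Finset.Icc 1 k, (1 - q ^ (n - k + j)) / (1 - q ^ j) else 0

namespace AU

/-- `P q m = ∏_{j=1}^m (1 - q^j)`. -/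
noncomputable def P (q : ℝ) (m : ℕ) : ℝ := ∏ j ∈ Finset.range m, (1 - q ^ (j + 1))

lemma P_pos {q : ℝ} (hq0 : 0 < q) (hq1 : q < 1) (m : ℕ) : 0 < P q m := by
  apply Finset.prod_pos
  intro j _
  have : q ^ (j + 1) < 1 := pow_lt_one₀ hq0.le hq1 (Nat.succ_ne_zero j)
  linarith

lemma P_ne {q : ℝ} (hq0 : 0 < q) (hq1 : q < 1) (m : ℕ) : P q m ≠ 0 :=
  (P_pos hq0 hq1 m).ne'

lemma P_succ (q : ℝ) (m : ℕ) : P q (m + 1) = P q m * (1 - q ^ (m + 1)) := by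
  simp [P, Finset.prod_range_succ]

lemma one_sub_pow_pos {q : ℝ} (hq0 : 0 < q) (hq1 : q < 1) {k : ℕ} (hk : k ≠ 0) :
    0 < 1 - q ^ k := by
  have : q ^ k < 1 := pow_lt_one₀ hq0.le hq1 hk
  linarith

lemma Icc_prod (f : ℕ → ℝ) (k : ℕ) : ∏ j ∈ Finset.Icc 1 k, f j = ∏ j ∈ Finset.range k, f (j + 1) := by
  rw [← Finset.Ico_add_one_right_eq_Icc, Finset.prod_Ico_eq_prod_range]
  simp [add_comm]

/-- closed form of `qbinom`. -/
lemma qbinom_eq {q : ℝ} (hq0 : 0 < q) (hq1 : q < 1) {n k : ℕ} (hk : k ≤ n) :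
    qbinom q n k = P q n / (P q k * P q (n - k)) := by
  rw [qbinom, if_pos hk, Finset.prod_div_distrib, Icc_prod, Icc_prod]
  have hnum : ∏ j ∈ Finset.range k, (1 - q ^ (n - k + (j + 1))) = P q n / P q (n - k) := by
    rw [eq_div_iff (P_ne hq0 hq1 _)]
    have hsplit : P q ((n - k) + k)
        = P q (n - k) * ∏ j ∈ Finset.range k, (1 - q ^ ((n - k) + j + 1)) := by
      rw [P, Finset.prod_range_add]; rfl
    rw [mul_comm]
    conv_rhs => rw [show n = (n - k) + k from (Nat.sub_add_cancel hk).symm]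
    rw [hsplit]
    congr 1
  rw [hnum]
  have h1 : (∏ j ∈ Finset.range k, (1 - q ^ (j + 1))) = P q k := rfl
  rw [h1, div_div, mul_comm (P q (n-k))]

lemma qbinom_of_gt {q : ℝ} {n k : ℕ} (h : n < k) : qbinom q n k = 0 := by
  simp [qbinom, Nat.not_le.mpr h]

lemma qbinom_diag {q : ℝ} (hq0 : 0 < q) (hq1 : q < 1) (n : ℕ) : qbinom q n n = 1 := by
  rw [qbinom, if_pos le_rfl]
  apply Finset.prod_eq_one
  intro j hj
  rw [Nat.sub_self, Nat.zero_add]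
  exact div_self (one_sub_pow_pos hq0 hq1 (by simp at hj; omega)).ne'

/-- q-Pascal recurrence. -/
lemma qbinom_pascal {q : ℝ} (hq0 : 0 < q) (hq1 : q < 1) (n k : ℕ) :
    qbinom q (n + 1) (k + 1) = qbinom q n (k + 1) + q ^ (n - k) * qbinom q n k := by
  rcases lt_trichotomy k n with hlt | rfl | hgt
  · have hk1 : k + 1 ≤ n := hlt
    have e1 : n + 1 - (k + 1) = n - k := by omega
    have e2 : n - (k + 1) = n - k - 1 := by omega
    have e3 : n - k = (n - k - 1) + 1 := by omega
    rw [qbinom_eq hq0 hq1 (by omega), qbinom_eq hq0 hq1 hk1, qbinom_eq hq0 hq1 (by omega),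
      e1, e2, P_succ q n, P_succ q k, e3, P_succ q (n - k - 1)]
    have hP1 := P_ne hq0 hq1 k
    have hP2 := P_ne hq0 hq1 (n - k - 1)
    have hP3 := P_ne hq0 hq1 n
    have hq2 : (1 - q ^ (k + 1)) ≠ 0 := (one_sub_pow_pos hq0 hq1 (by omega)).ne'
    have hq3 : (1 - q ^ (n - k - 1 + 1)) ≠ 0 := (one_sub_pow_pos hq0 hq1 (by omega)).ne'
    rw [show q ^ (n + 1) = q ^ (n - k - 1 + 1) * q ^ (k + 1) by
      rw [← pow_add]; congr 1; omega,
      show (n : ℕ) - k = n - k - 1 + 1 from e3]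
    simp only [Nat.add_sub_cancel]
    field_simp
    ring
  · rw [Nat.sub_self, pow_zero, qbinom_of_gt (Nat.lt_succ_self k), qbinom_diag hq0 hq1,
      qbinom_diag hq0 hq1]
    ring
  · rw [qbinom_of_gt (by omega : n + 1 < k + 1), qbinom_of_gt (by omega : n < k + 1),
      qbinom_of_gt hgt]
    ring

lemma tri (k : ℕ) : (k + 1) * (k + 2) / 2 = k * (k + 1) / 2 + (k + 1) := by
  have h : (k + 1) * (k + 2) = k * (k + 1) + 2 * (k + 1) := by ring
  have h2 : 2 ∣ k * (k + 1) := (Nat.even_mul_succ_self k).two_dvd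
  omega

/-- `D q n x = ∏_{j=0}^n (1 - x q^j)`. -/
noncomputable def D (q : ℝ) (n : ℕ) (x : ℝ) : ℝ := ∏ j ∈ Finset.range (n + 1), (1 - x * q ^ j)

noncomputable def F (q : ℝ) (n : ℕ) (x : ℝ) : ℝ :=
  ∑ k ∈ Finset.range (n + 1), (-1 : ℝ) ^ k * q ^ (k * (k + 1) / 2) * qbinom q n k / (1 - x * q ^ k)

lemma D_pos {q : ℝ} (hq0 : 0 < q) (hq1 : q < 1) {x : ℝ} (hx0 : 0 ≤ x) (hx1 : x < 1) (n : ℕ) :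
    0 < D q n x := by
  apply Finset.prod_pos
  intro j _
  have h1 : q ^ j ≤ 1 := pow_le_one₀ hq0.le hq1.le
  nlinarith

lemma qbinom_zero (q : ℝ) (n : ℕ) : qbinom q n 0 = 1 := by
  simp [qbinom]

lemma D_succ_left (q : ℝ) (n : ℕ) (x : ℝ) :
    D q (n + 1) x = (1 - x) * D q n (x * q) := by
  simp only [D]
  rw [Finset.prod_range_succ' (fun j => 1 - x * q ^ j) (n + 1)]
  simp only [pow_zero, mul_one, pow_succ]
  rw [mul_comm]
  congr 1
  apply Finset.prod_congr rfl
  intro j _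
  ring

lemma D_succ_right (q : ℝ) (n : ℕ) (x : ℝ) :
    D q (n + 1) x = D q n x * (1 - x * q ^ (n + 1)) := by
  rw [D, Finset.prod_range_succ]
  rfl

/-- the key partial fraction identity. -/
lemma F_eq {q : ℝ} (hq0 : 0 < q) (hq1 : q < 1) (n : ℕ) :
    ∀ x : ℝ, 0 ≤ x → x < 1 → F q n x = P q n / D q n x := by
  induction n with
  | zero =>
    intro x hx0 hx1
    simp [F, D, P, qbinom_zero]
  | succ n ih =>
    intro x hx0 hx1
    have hxq0 : 0 ≤ x * q := by positivity
    have hxq1 : x * q < 1 := by nlinarith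
    have key : F q (n + 1) x = F q n x - q ^ (n + 1) * F q n (x * q) := by
      rw [F, Finset.sum_range_succ' (fun k =>
        (-1 : ℝ) ^ k * q ^ (k * (k + 1) / 2) * qbinom q (n + 1) k / (1 - x * q ^ k)) (n + 1)]
      have hterm : ∀ k ∈ Finset.range (n + 1),
          (-1 : ℝ) ^ (k + 1) * q ^ ((k + 1) * (k + 1 + 1) / 2) * qbinom q (n + 1) (k + 1)
              / (1 - x * q ^ (k + 1))
          = ((-1 : ℝ) ^ (k + 1) * q ^ ((k + 1) * (k + 1 + 1) / 2) * qbinom q n (k + 1)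
              / (1 - x * q ^ (k + 1)))
            + (-(q ^ (n + 1))
                * ((-1 : ℝ) ^ k * q ^ (k * (k + 1) / 2) * qbinom q n k
                    / (1 - (x * q) * q ^ k))) := by
        intro k hk
        have hkn : k ≤ n := by simpa using Nat.lt_succ_iff.mp (Finset.mem_range.mp hk)
        have he : (1 : ℝ) - x * q ^ (k + 1) ≠ 0 := by
          have h1 : q ^ (k + 1) ≤ 1 := pow_le_one₀ hq0.le hq1.le
          nlinarith
        have hd : (x * q) * q ^ k = x * q ^ (k + 1) := by rw [pow_succ]; ring
        have ht : (k + 1) * (k + 1 + 1) / 2 = k * (k + 1) / 2 + (k + 1) := tri k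
        have hp : q ^ (n + 1) = q ^ (k + 1) * q ^ (n - k) := by
          rw [← pow_add]; congr 1; omega
        rw [qbinom_pascal hq0 hq1, hd, ht, hp]
        field_simp
        ring
      rw [Finset.sum_congr rfl hterm, Finset.sum_add_distrib, ← Finset.mul_sum]
      have hA : (∑ k ∈ Finset.range (n + 1),
          (-1 : ℝ) ^ (k + 1) * q ^ ((k + 1) * (k + 1 + 1) / 2) * qbinom q n (k + 1)
              / (1 - x * q ^ (k + 1)))
          + (-1 : ℝ) ^ 0 * q ^ (0 * (0 + 1) / 2) * qbinom q (n + 1) 0 / (1 - x * q ^ 0)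
          = F q n x := by
        have h0 : (-1 : ℝ) ^ 0 * q ^ (0 * (0 + 1) / 2) * qbinom q (n + 1) 0 / (1 - x * q ^ 0)
            = (-1 : ℝ) ^ 0 * q ^ (0 * (0 + 1) / 2) * qbinom q n 0 / (1 - x * q ^ 0) := by
          rw [qbinom_zero, qbinom_zero]
        rw [h0, ← Finset.sum_range_succ' (fun k =>
          (-1 : ℝ) ^ k * q ^ (k * (k + 1) / 2) * qbinom q n k / (1 - x * q ^ k)) (n + 1)]
        rw [Finset.sum_range_succ]
        rw [qbinom_of_gt (Nat.lt_succ_self n)]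
        rw [F]
        ring
      rw [add_right_comm, hA]
      simp only [F]
      ring
    have hD1 : D q (n + 1) x ≠ 0 := (D_pos hq0 hq1 hx0 hx1 (n + 1)).ne'
    have hDx : D q n x ≠ 0 := (D_pos hq0 hq1 hx0 hx1 n).ne'
    have hDxq : D q n (x * q) ≠ 0 := (D_pos hq0 hq1 hxq0 hxq1 n).ne'
    have h1x : (1 : ℝ) - x ≠ 0 := by linarith
    have h1xq : (1 : ℝ) - x * q ^ (n + 1) ≠ 0 := by
      have h1 : q ^ (n + 1) ≤ 1 := pow_le_one₀ hq0.le hq1.le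
      nlinarith
    rw [key, ih x hx0 hx1, ih (x * q) hxq0 hxq1]
    have e1 : P q n / D q n x = P q n * (1 - x * q ^ (n + 1)) / D q (n + 1) x := by
      rw [D_succ_right, mul_div_mul_right _ _ h1xq]
    have e2 : q ^ (n + 1) * (P q n / D q n (x * q))
        = (1 - x) * (q ^ (n + 1) * P q n) / D q (n + 1) x := by
      rw [D_succ_left, mul_div_mul_left _ _ h1x, mul_div_assoc]
    rw [e1, e2, div_sub_div_same]
    congr 1
    rw [P_succ]
    ring

lemma Icc_sum (f : ℕ → ℝ) (k : ℕ) :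
    ∑ j ∈ Finset.Icc 1 k, f j = ∑ j ∈ Finset.range k, f (j + 1) := by
  rw [← Finset.Ico_add_one_right_eq_Icc, Finset.sum_Ico_eq_sum_range]
  simp [add_comm]

/-- specialization at `x = q`. -/
lemma S_eq {q : ℝ} (hq0 : 0 < q) (hq1 : q < 1) (n : ℕ) :
    ∑ k ∈ Finset.range (n + 1),
        (-1 : ℝ) ^ k * q ^ (k * (k + 1) / 2) * qbinom q n k / (1 - q ^ (k + 1))
      = 1 / (1 - q ^ (n + 1)) := by
  have h := F_eq hq0 hq1 n q hq0.le hq1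
  have hF : F q n q = ∑ k ∈ Finset.range (n + 1),
      (-1 : ℝ) ^ k * q ^ (k * (k + 1) / 2) * qbinom q n k / (1 - q ^ (k + 1)) := by
    simp only [F]
    apply Finset.sum_congr rfl
    intro k _
    rw [pow_succ]
    ring_nf
  have hD : D q n q = P q (n + 1) := by
    simp only [D, P]
    apply Finset.prod_congr rfl
    intro j _
    rw [pow_succ]
    ring_nf
  rw [hF, hD, P_succ] at h
  rw [h, div_mul_eq_div_div, div_self (P_ne hq0 hq1 n)]

end AU

theorem andrews_uchimura (n : ℕ) (hn : 0 < n) (q : ℝ) (hq0 : 0 < q) (hq1 : q < 1) :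
    ∑ k ∈ Finset.Icc 1 n, (-1 : ℝ) ^ (k + 1) * q ^ (k * (k + 1) / 2) / (1 - q ^ k)
        * qbinom q n k
    = ∑ k ∈ Finset.Icc 1 n, q ^ k / (1 - q ^ k) := by
  induction n, hn using Nat.le_induction with
  | base =>
    rw [Finset.Icc_self, Finset.sum_singleton, Finset.sum_singleton,
      AU.qbinom_diag hq0 hq1]
    norm_num
  | succ n hn ih =>
    rw [AU.Icc_sum, AU.Icc_sum] at ih ⊢
    have hstep : ∀ j ∈ Finset.range (n + 1),
        (-1 : ℝ) ^ (j + 1 + 1) * q ^ ((j + 1) * (j + 1 + 1) / 2) / (1 - q ^ (j + 1))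
            * qbinom q (n + 1) (j + 1)
        = (-1 : ℝ) ^ (j + 1 + 1) * q ^ ((j + 1) * (j + 1 + 1) / 2) / (1 - q ^ (j + 1))
            * qbinom q n (j + 1)
          + q ^ (n + 1)
            * ((-1 : ℝ) ^ j * q ^ (j * (j + 1) / 2) * qbinom q n j / (1 - q ^ (j + 1))) := by
      intro j hj
      have hjn : j ≤ n := by
        have := Finset.mem_range.mp hj; omega
      have he : (1 : ℝ) - q ^ (j + 1) ≠ 0 :=
        (AU.one_sub_pow_pos hq0 hq1 (Nat.succ_ne_zero j)).ne'
      have ht : (j + 1) * (j + 1 + 1) / 2 = j * (j + 1) / 2 + (j + 1) := AU.tri j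
      have hp : q ^ (n + 1) = q ^ (j + 1) * q ^ (n - j) := by
        rw [← pow_add]; congr 1; omega
      rw [AU.qbinom_pascal hq0 hq1, ht, hp]
      field_simp
      ring
    rw [Finset.sum_congr rfl hstep, Finset.sum_add_distrib, ← Finset.mul_sum,
      AU.S_eq hq0 hq1 n]
    have h2 : ∑ j ∈ Finset.range (n + 1),
        (-1 : ℝ) ^ (j + 1 + 1) * q ^ ((j + 1) * (j + 1 + 1) / 2) / (1 - q ^ (j + 1))
            * qbinom q n (j + 1)
        = ∑ j ∈ Finset.range n,
        (-1 : ℝ) ^ (j + 1 + 1) * q ^ ((j + 1) * (j + 1 + 1) / 2) / (1 - q ^ (j + 1))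
            * qbinom q n (j + 1) := by
      rw [Finset.sum_range_succ, AU.qbinom_of_gt (Nat.lt_succ_self n), mul_zero, add_zero]
    rw [h2, ih, Finset.sum_range_succ]
    ring
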